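/- Let p be a prime, q > 1 a power of p and k ≥ 2 an integer. Let D' be any glissando square matrix over 𝔽_q[[t]] and put P̃(X) = P^{(k)}(X) · det(I − t^{k−1} X D') ∈ 𝔽_q[[t]][X], where P^{(k)}(X) = det(I − X·U^{(k)}). Then for every root λ ∈ K̄ of P̃ with v(λ) > −(k−1), the multiplicity of λ as a root of P̃ equals its multiplicity as a root of P^{(k)}; in other words, the multiset of roots of P̃ in K̄ of valuation greater than −(k−1) coincides (with multiplicity) with that of P^{(k)}. (Equivalently, the part of the Newton polygon of P̃ of slope less than k−1 agrees with that of P^{(k)}.) -/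

import Mathlib

open Polynomial

noncomputable section DrinfeldGM

/-- Integer-argument binomial coefficient `C(c,d)`, equal to `0` whenever any of
`c`, `d`, `c - d` is negative. -/
def intChoose (c d : ℤ) : ℤ :=
  if 0 ≤ c ∧ 0 ≤ d ∧ d ≤ c then (Nat.choose c.toNat d.toNat : ℤ) else 0

/-- The `(i,j)` entry of the matrix of the `U`-operator on `S_k(Γ₁(t))` in the
Bandini–Valentino basis (here `t` is the polynomial variable `X`).  For `i = j` it is
`(-t)^j C(k-2-j, j)`; for `i = j + h(q-1)` with `h ≠ 0` (equivalently `(q-1) ∣ i - j`,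
`i ≠ j`, in which case `h(q-1) = i - j`) it is
`-t^j (C(k-2-i, j-i) + (-1)^{j+1} C(k-2-i, j))`; and it is `0` otherwise. -/
def Uent (F : Type*) [Field F] (q k : ℕ) (i j : ℕ) : Polynomial F :=
  if i = j then
    (-Polynomial.X : Polynomial F) ^ j * ((intChoose ((k : ℤ) - 2 - (j : ℤ)) (j : ℤ) : ℤ) : Polynomial F)
  else if ((q : ℤ) - 1) ∣ ((i : ℤ) - (j : ℤ)) then
    -((Polynomial.X : Polynomial F) ^ j *
      ((intChoose ((k : ℤ) - 2 - (i : ℤ)) ((j : ℤ) - (i : ℤ)) +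
        (-1) ^ (j + 1) * intChoose ((k : ℤ) - 2 - (i : ℤ)) (j : ℤ) : ℤ) : Polynomial F))
  else 0

/-- The representing matrix `U^{(k)} ∈ M_{k-1}(𝔽_q[t])` of the `U`-operator on
`S_k(Γ₁(t))`, rows and columns indexed by `0, …, k-2`. -/
def Umat (F : Type*) [Field F] (q k : ℕ) :
    Matrix (Fin (k - 1)) (Fin (k - 1)) (Polynomial F) :=
  Matrix.of fun i j => Uent F q k (i : ℕ) (j : ℕ)

/-- A matrix over `𝔽_q[[t]]` is *glissando* if every entry of its `j`-th column is an
`𝔽_q`-multiple of `t^j`. -/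
def Glissando {F : Type*} [Field F] {m n : ℕ}
    (B : Matrix (Fin m) (Fin n) (PowerSeries F)) : Prop :=
  ∀ i j, ∃ c : F, B i j = PowerSeries.C c * (PowerSeries.X : PowerSeries F) ^ (j : ℕ)

/-- The inclusion `𝔽_q[t] → 𝔽_q[[t]]`. -/
def polyToPS (F : Type*) [Field F] : Polynomial F →+* PowerSeries F :=
  Polynomial.coeToPowerSeries.ringHom

/-- The inclusion of `𝔽_q[[t]]` into a fixed algebraic closure `K̄` of `K = 𝔽_q((t))`. -/
def psToKbar (F : Type*) [Field F] :
    PowerSeries F →+* AlgebraicClosure (LaurentSeries F) :=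
  (algebraMap (LaurentSeries F) (AlgebraicClosure (LaurentSeries F))).comp
    (algebraMap (PowerSeries F) (LaurentSeries F))

/-- The inclusion `𝔽_q[t] → K̄`. -/
def polyToKbar (F : Type*) [Field F] :
    Polynomial F →+* AlgebraicClosure (LaurentSeries F) :=
  (psToKbar F).comp (polyToPS F)

/-- The element `t` of `K̄`. -/
def tbar (F : Type*) [Field F] : AlgebraicClosure (LaurentSeries F) :=
  psToKbar F PowerSeries.X

/-- Integrality over `𝔽_q[[t]]` of an element of `K̄`. -/
def IntegralPS (F : Type*) [Field F] (x : AlgebraicClosure (LaurentSeries F)) : Prop :=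
  letI : Algebra (PowerSeries F) (AlgebraicClosure (LaurentSeries F)) := (psToKbar F).toAlgebra
  IsIntegral (PowerSeries F) x

/-- `HasVal F λ α` says that `λ ∈ K̄` is nonzero and has valuation `α` for the unique
extension `v` to `K̄` of the `t`-adic valuation with `v(t) = 1`: writing `α = a/b` with
`b > 0`, this means that both `λ^b/t^a` and `t^a/λ^b` are integral over `𝔽_q[[t]]`. -/
def HasVal (F : Type*) [Field F] (lam : AlgebraicClosure (LaurentSeries F)) (α : ℚ) : Prop :=
  lam ≠ 0 ∧ ∃ a b : ℤ, 0 < b ∧ α = (a : ℚ) / (b : ℚ) ∧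
    IntegralPS F (lam ^ b / tbar F ^ a) ∧ IntegralPS F (tbar F ^ a / lam ^ b)

/-- `d(k, α)`: the number of roots `λ` of `det(X·I - U^{(k)})` in `K̄` with `v(λ) = α`,
counted with multiplicity.  This is the dimension of the slope-`α` generalized eigenspace
of the `U`-operator on `S_k(Γ₁(t))`. -/
def dDim (F : Type*) [Field F] (q k : ℕ) (α : ℚ) : ℕ :=
  letI := Classical.decPred fun lam : AlgebraicClosure (LaurentSeries F) => HasVal F lam α
  Multiset.card <| Multiset.filter (fun lam => HasVal F lam α) <|
    (((Umat F q k).charpoly).map (polyToKbar F)).roots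

/-- `det(I - t^l X B)` for a square matrix `B` over `𝔽_q[[t]]`, as a polynomial in `X`
over `𝔽_q[[t]]`. -/
def charSeriesTw (F : Type*) [Field F] {m : ℕ} (l : ℕ)
    (B : Matrix (Fin m) (Fin m) (PowerSeries F)) : Polynomial (PowerSeries F) :=
  Matrix.det (1 - (Polynomial.C ((PowerSeries.X : PowerSeries F) ^ l) * Polynomial.X) •
    B.map Polynomial.C)

/-- `det(I - X B)` for a square matrix `B` over `𝔽_q[[t]]`. -/
def charSeriesPS (F : Type*) [Field F] {m : ℕ}
    (B : Matrix (Fin m) (Fin m) (PowerSeries F)) : Polynomial (PowerSeries F) :=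
  Matrix.det (1 - (Polynomial.X : Polynomial (PowerSeries F)) • B.map Polynomial.C)

/-- `P^{(k)}(X) = det(I - X·U^{(k)}) ∈ 𝔽_q[t][X]`. -/
def Pser (F : Type*) [Field F] (q k : ℕ) : Polynomial (Polynomial F) :=
  Matrix.det (1 - (Polynomial.X : Polynomial (Polynomial F)) • (Umat F q k).map Polynomial.C)



section Helpers

open Polynomial

lemma eval_det_one_sub_smul {R S : Type*} [CommRing R] [CommRing S] {m : ℕ}
    (c : Polynomial R) (M : Matrix (Fin m) (Fin m) R) (ψ : R →+* S) (x : S) :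
    ((Matrix.det (1 - (c * Polynomial.X) • M.map Polynomial.C)).map ψ).eval x =
      Matrix.det (1 - (Polynomial.eval₂ ψ x c * x) • M.map ψ) := by
  rw [Polynomial.eval_map, ← Polynomial.coe_eval₂RingHom, RingHom.map_det,
    RingHom.mapMatrix_apply]
  congr 1
  ext i j
  simp only [Matrix.map_apply, Matrix.sub_apply, Matrix.smul_apply, Matrix.one_apply,
    smul_eq_mul, Polynomial.coe_eval₂RingHom, Polynomial.eval₂_sub, Polynomial.eval₂_mul,
    Polynomial.eval₂_X, Polynomial.eval₂_C, apply_ite (Polynomial.eval₂ ψ x),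
    Polynomial.eval₂_one, Polynomial.eval₂_zero]

lemma constCoeff_det_one_sub_smul {R : Type*} [CommRing R] {m : ℕ}
    (c : Polynomial R) (hc : c.coeff 0 = 0) (M : Matrix (Fin m) (Fin m) R) :
    (Matrix.det (1 - c • M.map Polynomial.C)).coeff 0 = 1 := by
  have hc' : c.eval 0 = 0 := by rw [← Polynomial.coeff_zero_eq_eval_zero, hc]
  rw [Polynomial.coeff_zero_eq_eval_zero, ← Polynomial.coe_evalRingHom, RingHom.map_det,
    RingHom.mapMatrix_apply]
  have h1 : (1 - c • M.map Polynomial.C).map (Polynomial.evalRingHom 0) = 1 := by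
    ext i j
    by_cases h : i = j <;>
      simp [h, Matrix.map_apply, Matrix.sub_apply, Matrix.smul_apply, Matrix.one_apply,
        smul_eq_mul, hc']
  rw [h1, Matrix.det_one]

lemma eval_charpoly' {S : Type*} [CommRing S] {m : ℕ} (B : Matrix (Fin m) (Fin m) S) (x : S) :
    (B.charpoly).eval x = Matrix.det (x • (1 : Matrix (Fin m) (Fin m) S) - B) := by
  rw [Matrix.charpoly, ← Polynomial.coe_evalRingHom, RingHom.map_det, RingHom.mapMatrix_apply]
  congr 1
  ext i j
  by_cases h : i = j <;>
    simp [h, Matrix.charmatrix_apply_eq, Matrix.charmatrix_apply_ne, Matrix.map_apply,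
      Matrix.sub_apply, Matrix.smul_apply, Matrix.one_apply, smul_eq_mul]

lemma inv_tbar_not_integral (F : Type) [Field F] :
    letI : Algebra (PowerSeries F) (AlgebraicClosure (LaurentSeries F)) :=
      (psToKbar F).toAlgebra
    ¬ IsIntegral (PowerSeries F) (tbar F)⁻¹ := by
  letI : Algebra (PowerSeries F) (AlgebraicClosure (LaurentSeries F)) :=
    (psToKbar F).toAlgebra
  intro h
  obtain ⟨P, hP, hP0⟩ := h
  set g := algebraMap (LaurentSeries F) (AlgebraicClosure (LaurentSeries F)) with hg
  set f := algebraMap (PowerSeries F) (LaurentSeries F) with hf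
  have hinj : Function.Injective g := RingHom.injective g
  have hfinj : Function.Injective f := IsFractionRing.injective _ _
  have hXne : f PowerSeries.X ≠ 0 := by
    rw [map_ne_zero_iff f hfinj]
    exact PowerSeries.X_ne_zero
  set y : LaurentSeries F := (f PowerSeries.X)⁻¹ with hy
  have h2 : Polynomial.eval₂ f y P = 0 := by
    apply hinj
    rw [map_zero, Polynomial.hom_eval₂, hy, map_inv₀]
    exact hP0
  have hyint : IsIntegral (PowerSeries F) y := ⟨P, hP, h2⟩
  obtain ⟨z, hz⟩ := (IsIntegrallyClosed.isIntegral_iff (K := LaurentSeries F)).mp hyint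
  have h3 : f (z * PowerSeries.X) = 1 := by
    rw [map_mul, hz, hy, inv_mul_cancel₀ hXne]
  have h4 : z * PowerSeries.X = 1 := hfinj (by rw [h3, map_one])
  have h5 := congrArg (PowerSeries.constantCoeff : PowerSeries F →+* F) h4
  simp at h5

end Helpers

set_option synthInstance.maxHeartbeats 1000000 in
set_option maxHeartbeats 2000000 in
/-- Let `D'` be any glissando square matrix over `𝔽_q[[t]]` and put
`P̃(X) = P^{(k)}(X) · det(I - t^{k-1} X D')`, where `P^{(k)}(X) = det(I - X·U^{(k)})`.
Then for every root `λ ∈ K̄` of `P̃` with `v(λ) > -(k-1)`, the multiplicity of `λ` as a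
root of `P̃` equals its multiplicity as a root of `P^{(k)}`; i.e. the part of the Newton
polygon of `P̃` of slope less than `k-1` agrees with that of `P^{(k)}`. -/
theorem newton_polygon_window
    (p q : ℕ) (hp : p.Prime) (hq : ∃ e : ℕ, 1 ≤ e ∧ q = p ^ e)
    (F : Type) [Field F] [Fintype F] (hF : Fintype.card F = q)
    (k : ℕ) (hk : 2 ≤ k)
    (r : ℕ) (D' : Matrix (Fin r) (Fin r) (PowerSeries F)) (hD' : Glissando D')
    (lam : AlgebraicClosure (LaurentSeries F))
    (hroot : ((Pser F q k).map (polyToKbar F) *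
      (charSeriesTw F (k - 1) D').map (psToKbar F)).eval lam = 0)
    (α : ℚ) (hval : HasVal F lam α) (hα : -((k : ℚ) - 1) < α) :
    ((Pser F q k).map (polyToKbar F) *
        (charSeriesTw F (k - 1) D').map (psToKbar F)).rootMultiplicity lam =
      ((Pser F q k).map (polyToKbar F)).rootMultiplicity lam := by
  classical
  letI : Algebra (PowerSeries F) (AlgebraicClosure (LaurentSeries F)) :=
    (psToKbar F).toAlgebra
  set ψ := psToKbar F with hψ
  obtain ⟨hlam0, a, b, hb, hab, hint2, hint3⟩ := hval
  have htb : tbar F = ψ PowerSeries.X := rfl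
  have htbar0 : tbar F ≠ 0 := by
    rw [htb]
    have hψinj : Function.Injective ψ := by
      rw [hψ, psToKbar, RingHom.coe_comp]
      exact Function.Injective.comp
        (RingHom.injective (algebraMap (LaurentSeries F) (AlgebraicClosure (LaurentSeries F))))
        (IsFractionRing.injective (PowerSeries F) (LaurentSeries F))
    rw [map_ne_zero_iff ψ hψinj]
    exact PowerSeries.X_ne_zero
  set μ : AlgebraicClosure (LaurentSeries F) := ψ PowerSeries.X ^ (k - 1) * lam with hμ
  have hμ0 : μ ≠ 0 := mul_ne_zero (pow_ne_zero _ (htb ▸ htbar0)) hlam0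
  -- the second factor does not vanish at `lam`
  have hQ : ¬ ((charSeriesTw F (k - 1) D').map ψ).IsRoot lam := by
    intro hroot2
    have hdet : Matrix.det (1 - μ • D'.map ψ :
        Matrix (Fin r) (Fin r) (AlgebraicClosure (LaurentSeries F))) = 0 := by
      have h6 := eval_det_one_sub_smul
        (Polynomial.C ((PowerSeries.X : PowerSeries F) ^ (k - 1))) D' ψ lam
      rw [Polynomial.eval₂_C] at h6
      rw [hμ, ← map_pow, ← h6]
      exact hroot2
    -- `μ⁻¹` is integral over `𝔽_q[[t]]`
    have hint1 : IsIntegral (PowerSeries F) μ⁻¹ := by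
      refine ⟨Matrix.charpoly D', Matrix.charpoly_monic D', ?_⟩
      have he : Polynomial.eval₂ ψ μ⁻¹ (Matrix.charpoly D') =
          ((Matrix.charpoly D').map ψ).eval μ⁻¹ := (Polynomial.eval_map _ _).symm
      show Polynomial.eval₂ ψ μ⁻¹ (Matrix.charpoly D') = 0
      rw [he, ← Matrix.charpoly_map, eval_charpoly']
      have hmat : μ⁻¹ • (1 : Matrix (Fin r) (Fin r) (AlgebraicClosure (LaurentSeries F))) - D'.map ψ =
          μ⁻¹ • (1 - μ • D'.map ψ) := by
        rw [smul_sub, smul_smul, inv_mul_cancel₀ hμ0, one_smul]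
      rw [hmat, Matrix.det_smul, hdet, mul_zero]
    -- exponent bookkeeping
    set d : ℕ := k - 1 with hdd
    have hd1 : 1 ≤ d := by omega
    have hdq : ((d : ℚ)) = (k : ℚ) - 1 := by
      rw [hdd, Nat.cast_sub (by omega : 1 ≤ k)]
      norm_num
    have hbQ : (0 : ℚ) < (b : ℚ) := by exact_mod_cast hb
    have hfrac : -((d : ℚ)) < (a : ℚ) / (b : ℚ) := by rw [← hab, hdq]; exact hα
    have hZ : -((d : ℤ)) * b < a := by
      have h7 : (-((d : ℚ))) * (b : ℚ) < (a : ℚ) := (lt_div_iff₀ hbQ).mp hfrac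
      exact_mod_cast h7
    set Mi : ℤ := (d : ℤ) * b + a with hMi
    have hMipos : 0 < Mi := by rw [hMi]; nlinarith
    set n : ℕ := b.toNat with hnn
    have hn : (n : ℤ) = b := Int.toNat_of_nonneg hb.le
    set Nt : ℕ := Mi.toNat with hNtt
    have hNt : (Nt : ℤ) = Mi := Int.toNat_of_nonneg hMipos.le
    have hNt1 : 1 ≤ Nt := by omega
    -- the key algebraic identity
    have key : μ ^ n * ((tbar F)⁻¹) ^ Nt = lam ^ b / tbar F ^ a := by
      rw [hμ, ← htb, mul_pow, ← pow_mul, inv_pow, ← zpow_natCast (tbar F) (d * n),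
        ← zpow_natCast (tbar F) Nt, ← zpow_neg, mul_comm ((tbar F) ^ ((d * n : ℕ) : ℤ)),
        mul_assoc, ← zpow_add₀ htbar0, ← zpow_natCast lam n, hn, div_eq_mul_inv,
        ← zpow_neg]
      congr 1
      have : ((d * n : ℕ) : ℤ) = (d : ℤ) * b := by push_cast [hn]; ring
      rw [this, hNt, hMi]
      ring
    have hx : μ⁻¹ ^ n * (lam ^ b / tbar F ^ a) = (tbar F)⁻¹ ^ Nt := by
      rw [← key, inv_pow, inv_mul_cancel_left₀ (pow_ne_zero n hμ0)]
    have hint2' : IsIntegral (PowerSeries F) (lam ^ b / tbar F ^ a) := hint2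
    have hxint : IsIntegral (PowerSeries F) (((tbar F)⁻¹) ^ Nt) := by
      rw [← hx]
      exact (hint1.pow n).mul hint2'
    obtain ⟨m, hm⟩ : ∃ m : ℕ, Nt = m + 1 := ⟨Nt - 1, by omega⟩
    have hpowint : IsIntegral (PowerSeries F) ((tbar F) ^ m) := by
      have : (tbar F) ^ m =
          algebraMap (PowerSeries F) (AlgebraicClosure (LaurentSeries F)) (PowerSeries.X ^ m) := by
        rw [map_pow]; rfl
      rw [this]
      exact isIntegral_algebraMap
    have hfinal : IsIntegral (PowerSeries F) ((tbar F)⁻¹) := by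
      have hrw : ((tbar F)⁻¹) ^ Nt * (tbar F) ^ m = (tbar F)⁻¹ := by
        rw [hm, pow_succ, mul_comm (((tbar F)⁻¹) ^ m), mul_assoc, ← mul_pow,
          inv_mul_cancel₀ htbar0, one_pow, mul_one]
      rw [← hrw]
      exact hxint.mul hpowint
    exact (inv_tbar_not_integral F) hfinal
  -- the product is nonzero
  have hne : ((Pser F q k).map (polyToKbar F) *
      (charSeriesTw F (k - 1) D').map ψ) ≠ 0 := by
    intro h0
    have hc1 : ((Pser F q k).map (polyToKbar F) *
        (charSeriesTw F (k - 1) D').map ψ).coeff 0 = 1 := by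
      rw [Polynomial.mul_coeff_zero, Polynomial.coeff_map, Polynomial.coeff_map]
      have e1 : (Pser F q k).coeff 0 = 1 :=
        constCoeff_det_one_sub_smul Polynomial.X Polynomial.coeff_X_zero _
      have e2 : (charSeriesTw F (k - 1) D').coeff 0 = 1 :=
        constCoeff_det_one_sub_smul _ (by simp) _
      rw [e1, e2, map_one, map_one, mul_one]
    rw [h0] at hc1
    simp at hc1
  rw [Polynomial.rootMultiplicity_mul hne, Polynomial.rootMultiplicity_eq_zero hQ, add_zero]


end DrinfeldGM
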